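/- arXiv:1808.04664 — 2 statements merged into one kernel-verified Lean document; each statement's English description precedes it below -/
import Mathlib

section
/- For every m ≥ 1, the complete graph K_{m+1} on m+1 vertices does not belong to the class 𝒢^(m−1); consequently 𝒢^(m) \ 𝒢^(m−1) is nonempty for every m ≥ 1. -/
namespace PincushionPaper

/-- Disjoint union of two simplicial graphs. -/
def disjUnion {V W : Type} (G : SimpleGraph V) (H : SimpleGraph W) :
    SimpleGraph (V ⊕ W) where
  Adj x y :=
    match x, y with
    | Sum.inl a, Sum.inl b => G.Adj a b
    | Sum.inr a, Sum.inr b => H.Adj a b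
    | _, _ => False
  symm := by
    constructor
    rintro (a | a) (b | b) h
    · exact G.adj_symm h
    · exact h.elim
    · exact h.elim
    · exact H.adj_symm h
  loopless := by
    constructor
    rintro (a | a) h
    · exact G.loopless.irrefl a h
    · exact H.loopless.irrefl a h

/-- The pinning `Φ_{(G,v)}(H)` of `H` to `G` at the vertex `v` of `G`:
vertex set `V ⊔ W`, edges those of `G` and `H` together with an edge
from every vertex of `H` to `v`. -/
def pinning {V W : Type} (G : SimpleGraph V) (v : V) (H : SimpleGraph W) :
    SimpleGraph (V ⊕ W) where
  Adj x y :=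
    match x, y with
    | Sum.inl a, Sum.inl b => G.Adj a b
    | Sum.inr a, Sum.inr b => H.Adj a b
    | Sum.inl a, Sum.inr _ => a = v
    | Sum.inr _, Sum.inl b => b = v
  symm := by
    constructor
    rintro (a | a) (b | b) h
    · exact G.adj_symm h
    · exact h
    · exact h
    · exact H.adj_symm h
  loopless := by
    constructor
    rintro (a | a) h
    · exact G.loopless.irrefl a h
    · exact H.loopless.irrefl a h

/-- Graphs obtained from the empty graph by repeatedly appending a graph
satisfying `P`, each appended graph being either placed as a disjoint union
with the graph built so far, or pinned to the graph built so far at one of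
its vertices; the resulting class is closed under graph isomorphism. -/
inductive BuiltFrom (P : ∀ V : Type, SimpleGraph V → Prop) :
    ∀ V : Type, SimpleGraph V → Prop
  | empty : BuiltFrom P Empty ⊥
  | disj {V W : Type} {G : SimpleGraph V} {H : SimpleGraph W} :
      BuiltFrom P V G → P W H → BuiltFrom P (V ⊕ W) (disjUnion G H)
  | pin {V W : Type} {G : SimpleGraph V} {H : SimpleGraph W} (v : V) :
      BuiltFrom P V G → P W H → BuiltFrom P (V ⊕ W) (pinning G v H)
  | iso {V W : Type} {G : SimpleGraph V} {H : SimpleGraph W} :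
      BuiltFrom P V G → (G ≃g H) → BuiltFrom P W H

/-- The classes `𝒢^(m)`: `𝒢^(0)` consists of the one-vertex graph only
(up to isomorphism), and `𝒢^(m+1)` consists of the graphs built from
graphs in `𝒢^(m)` by disjoint unions and pinnings. -/
def GClass : ℕ → ∀ V : Type, SimpleGraph V → Prop
  | 0 => fun _ G => Nonempty (G ≃g (⊥ : SimpleGraph Unit))
  | m + 1 => BuiltFrom (GClass m)

/-- The pincushion class `𝒢^(∞) = ⋃ₘ 𝒢^(m)`. -/
def Pincushion (V : Type) (G : SimpleGraph V) : Prop := ∃ m, GClass m V G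

/-- A pin of a graph: a vertex adjacent to exactly one other vertex. -/
def IsPin {V : Type} (G : SimpleGraph V) (v : V) : Prop := ∃! w, G.Adj v w

end PincushionPaper

open PincushionPaper

open SimpleGraph

lemma pullback_clique_inl {V W : Type} (G : SimpleGraph V) (G' : SimpleGraph (V ⊕ W))
    (hadj : ∀ a b : V, G'.Adj (Sum.inl a) (Sum.inl b) → G.Adj a b)
    {s : Finset (V ⊕ W)} (hs : G'.IsClique s) (h : ∀ x ∈ s, ∃ a, x = Sum.inl a) :
    ∃ t : Finset V, t.card = s.card ∧ G.IsClique t := by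
  classical
  refine ⟨s.preimage Sum.inl Sum.inl_injective.injOn, ?_, ?_⟩
  · rw [Finset.card_preimage]
    congr 1
    apply Finset.filter_true_of_mem
    intro x hx
    obtain ⟨a, rfl⟩ := h x hx
    exact ⟨a, rfl⟩
  · intro a ha b hb hab
    exact hadj a b (hs (Finset.mem_preimage.1 ha) (Finset.mem_preimage.1 hb)
      (fun he => hab (Sum.inl.inj he)))

lemma pullback_clique_inr {V W : Type} (H : SimpleGraph W) (G' : SimpleGraph (V ⊕ W))
    (hadj : ∀ a b : W, G'.Adj (Sum.inr a) (Sum.inr b) → H.Adj a b)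
    {s : Finset (V ⊕ W)} (hs : G'.IsClique s) (h : ∀ x ∈ s, ∃ a, x = Sum.inr a) :
    ∃ t : Finset W, t.card = s.card ∧ H.IsClique t := by
  classical
  refine ⟨s.preimage Sum.inr Sum.inr_injective.injOn, ?_, ?_⟩
  · rw [Finset.card_preimage]
    congr 1
    apply Finset.filter_true_of_mem
    intro x hx
    obtain ⟨a, rfl⟩ := h x hx
    exact ⟨a, rfl⟩
  · intro a ha b hb hab
    exact hadj a b (hs (Finset.mem_preimage.1 ha) (Finset.mem_preimage.1 hb)
      (fun he => hab (Sum.inr.inj he)))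

lemma builtFrom_cliqueFree {P : ∀ V : Type, SimpleGraph V → Prop} {k : ℕ}
    (hP : ∀ (W : Type) (H : SimpleGraph W), P W H → H.CliqueFree k)
    {V : Type} {G : SimpleGraph V} (hG : BuiltFrom P V G) : G.CliqueFree (k + 1) := by
  classical
  induction hG with
  | empty =>
      intro t ht
      have h1 : 0 < t.card := by rw [ht.card_eq]; omega
      obtain ⟨x, -⟩ := Finset.card_pos.1 h1
      exact x.elim
  | @disj V W G H hG hH ih =>
      intro s hs
      by_cases hl : ∀ x ∈ s, ∃ a, x = Sum.inl a
      · obtain ⟨t, htc, htcl⟩ := pullback_clique_inl G (disjUnion G H)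
          (fun a b h => h) hs.isClique hl
        exact ih t ⟨htcl, by rw [htc, hs.card_eq]⟩
      · push_neg at hl
        obtain ⟨x, hx, hxl⟩ := hl
        obtain (a | b) := x
        · exact absurd rfl (hxl a)
        have hr : ∀ y ∈ s, ∃ c, y = Sum.inr c := by
          intro y hy
          obtain (a | c) := y
          · exfalso
            have hne : (Sum.inl a : V ⊕ W) ≠ Sum.inr b := by simp
            exact hs.isClique hy hx hne
          · exact ⟨c, rfl⟩
        obtain ⟨t, htc, htcl⟩ := pullback_clique_inr H (disjUnion G H)
          (fun a b h => h) hs.isClique hr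
        exact (hP W H hH).mono (Nat.le_succ k) t ⟨htcl, by rw [htc, hs.card_eq]⟩
  | @pin V W G H v hG hH ih =>
      intro s hs
      by_cases hl : ∀ x ∈ s, ∃ a, x = Sum.inl a
      · obtain ⟨t, htc, htcl⟩ := pullback_clique_inl G (pinning G v H)
          (fun a b h => h) hs.isClique hl
        exact ih t ⟨htcl, by rw [htc, hs.card_eq]⟩
      · push_neg at hl
        obtain ⟨x, hx, hxl⟩ := hl
        obtain (a | b) := x
        · exact absurd rfl (hxl a)
        set sR := s.filter (fun y => y.isRight) with hsRdef
        have hsub : s ⊆ insert (Sum.inl v) sR := by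
          intro y hy
          obtain (a | c) := y
          · by_cases hab : (Sum.inl a : V ⊕ W) = Sum.inr b
            · exact absurd hab (by simp)
            · have hadj := hs.isClique hy hx hab
              have hav : a = v := hadj
              rw [hav]; exact Finset.mem_insert_self _ _
          · exact Finset.mem_insert_of_mem (Finset.mem_filter.2 ⟨hy, rfl⟩)
        have hcard : k ≤ sR.card := by
          have h1 := Finset.card_le_card hsub
          have h2 := Finset.card_insert_le (Sum.inl v : V ⊕ W) sR
          have h3 := hs.card_eq
          omega
        have hRsub : (sR : Set (V ⊕ W)) ⊆ (s : Set (V ⊕ W)) := by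
          exact_mod_cast Finset.filter_subset _ s
        have hrr : ∀ y ∈ sR, ∃ c, y = Sum.inr c := by
          intro y hy
          obtain (a | c) := y
          · simp [hsRdef] at hy
          · exact ⟨c, rfl⟩
        obtain ⟨t, htc, htcl⟩ := pullback_clique_inr H (pinning G v H)
          (fun a b h => h) (hs.isClique.subset hRsub) hrr
        obtain ⟨u, hut, huc⟩ := Finset.exists_subset_card_eq (htc ▸ hcard)
        exact hP W H hH u ⟨htcl.subset hut, huc⟩
  | iso hG e ih =>
      exact ih.comap (Embedding.isContained e.symm.toEmbedding)

lemma gclass_cliqueFree : ∀ (m : ℕ) (V : Type) (G : SimpleGraph V),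
    GClass m V G → G.CliqueFree (m + 2)
  | 0, V, G, ⟨e⟩ => (cliqueFree_bot le_rfl).comap (Embedding.isContained e.toEmbedding)
  | m + 1, V, G, h => builtFrom_cliqueFree (gclass_cliqueFree m) h

lemma singleton_mem_gclass : ∀ m : ℕ, GClass m (Fin 1) ⊤
  | 0 => ⟨⟨⟨fun _ => (), fun _ => 0, fun x => Subsingleton.elim _ _,
      fun x => Subsingleton.elim _ _⟩, by
        intro a b
        constructor
        · intro h; exact h.elim
        · intro h; exact absurd (Subsingleton.elim a b) h⟩⟩
  | m + 1 => BuiltFrom.iso (BuiltFrom.disj BuiltFrom.empty (singleton_mem_gclass m))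
      ⟨Equiv.emptySum Empty (Fin 1), by
        rintro (a | a) (b | b)
        · exact a.elim
        · exact a.elim
        · exact b.elim
        · rfl⟩

lemma pinning_top_eq (m : ℕ) :
    pinning (⊤ : SimpleGraph (Fin 1)) 0 (⊤ : SimpleGraph (Fin (m + 1))) =
      (⊤ : SimpleGraph (Fin 1 ⊕ Fin (m + 1))) := by
  ext x y
  rcases x with a | a <;> rcases y with b | b
  · constructor
    · intro h
      exact absurd (Subsingleton.elim a b)
        (show (⊤ : SimpleGraph (Fin 1)).Adj a b from h).ne
    · intro h; exact absurd (congrArg Sum.inl (Subsingleton.elim a b)) h.ne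
  · constructor
    · intro _; simp
    · intro _; show a = 0; exact Subsingleton.elim a 0
  · constructor
    · intro _; simp
    · intro _; show b = 0; exact Subsingleton.elim b 0
  · constructor
    · intro h; simpa using h.ne
    · intro h
      show (⊤ : SimpleGraph (Fin (m + 1))).Adj a b
      simpa using h.ne

lemma complete_mem_gclass : ∀ m : ℕ, GClass m (Fin (m + 1)) ⊤
  | 0 => singleton_mem_gclass 0
  | m + 1 => by
      have h1 : BuiltFrom (GClass m) (Fin 1) ⊤ := singleton_mem_gclass (m + 1)
      have h2 := BuiltFrom.pin (0 : Fin 1) h1 (complete_mem_gclass m)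
      rw [pinning_top_eq m] at h2
      exact BuiltFrom.iso h2
        (Iso.completeGraph (finSumFinEquiv.trans (finCongr (by omega))))

/-- For every `m ≥ 1`, the complete graph `K_{m+1}` does not belong to
`𝒢^(m-1)`; consequently `𝒢^(m) \ 𝒢^(m-1)` is nonempty. -/
theorem complete_not_mem_gclass_pred (m : ℕ) (hm : 1 ≤ m) :
    ¬ GClass (m - 1) (Fin (m + 1)) ⊤ ∧
      ∃ (V : Type) (G : SimpleGraph V), GClass m V G ∧ ¬ GClass (m - 1) V G := by
  obtain ⟨k, rfl⟩ : ∃ k, m = k + 1 := ⟨m - 1, by omega⟩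
  have hnot : ¬ GClass k (Fin (k + 2)) ⊤ := by
    intro h
    exact not_cliqueFree_of_top_embedding (Embedding.isContained Embedding.refl) (gclass_cliqueFree k _ _ h)
  exact ⟨hnot, ⟨Fin (k + 2), ⊤, complete_mem_gclass (k + 1), hnot⟩⟩
end

section
/- Every word over the vertex set of a simplicial graph Γ is equivalent, under the equivalence relation ∼ generated by deleting one of two equal adjacent letters and swapping adjacent letters joined by an edge of Γ, to a reduced word. -/
namespace GraphWords

/-- One-step moves on words over the vertex set of a simplicial graph `G`:
deleting one of two equal adjacent letters, and swapping two adjacent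
letters joined by an edge of `G`. -/
inductive WordStep {V : Type} (G : SimpleGraph V) : List V → List V → Prop
  | delete (p s : List V) (v : V) :
      WordStep G (p ++ v :: v :: s) (p ++ v :: s)
  | swap (p s : List V) (v w : V) (h : G.Adj v w) :
      WordStep G (p ++ v :: w :: s) (p ++ w :: v :: s)

/-- The equivalence relation `∼` on words generated by the above moves. -/
def WordEquiv {V : Type} (G : SimpleGraph V) : List V → List V → Prop :=
  Relation.EqvGen (WordStep G)

/-- A word `(v_1, …, v_n)` is reduced if whenever `v_k = v_l` with `k < l`
there is a `p` with `k < p < l` such that `(v_k, v_p) ∉ EΓ`.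
(In particular the empty word is reduced.) -/
def Reduced {V : Type} (G : SimpleGraph V) (w : List V) : Prop :=
  ∀ k l : Fin w.length, k < l → w.get k = w.get l →
    ∃ p : Fin w.length, k < p ∧ p < l ∧ ¬ G.Adj (w.get k) (w.get p)

end GraphWords

open GraphWords

lemma bubble {V : Type} (G : SimpleGraph V) (v : V) :
    ∀ (b p s : List V), (∀ x ∈ b, G.Adj v x) →
      WordEquiv G (p ++ b ++ v :: s) (p ++ v :: (b ++ s)) := by
  intro b
  induction b with
  | nil => intro p s _; simp; exact Relation.EqvGen.refl _
  | cons x b ih =>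
    intro p s h
    have h1 : WordEquiv G (p ++ (x :: b) ++ v :: s) (p ++ x :: v :: (b ++ s)) := by
      have := ih (p ++ [x]) s (fun y hy => h y (List.mem_cons_of_mem _ hy))
      simpa using this
    have h2 : WordStep G (p ++ x :: v :: (b ++ s)) (p ++ v :: x :: (b ++ s)) :=
      WordStep.swap p (b ++ s) x v (G.adj_symm (h x List.mem_cons_self))
    exact Relation.EqvGen.trans _ _ _ h1 (Relation.EqvGen.rel _ _ h2)

lemma shrink {V : Type} (G : SimpleGraph V) (w : List V) (h : ¬ Reduced G w) :
    ∃ w', WordEquiv G w w' ∧ w'.length < w.length := by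
  unfold Reduced at h
  push_neg at h
  obtain ⟨k, l, hkl, heq, hadj⟩ := h
  set K : ℕ := (k : ℕ) with hK
  set L : ℕ := (l : ℕ) with hL
  have hKL : K < L := hkl
  have hLlen : L < w.length := l.isLt
  set v : V := w.get k with hv
  set a : List V := w.take K with ha
  set b : List V := (w.drop (K+1)).take (L-K-1) with hb
  set c : List V := w.drop (L+1) with hc
  have hbl : b.length ≤ L - K - 1 := by
    rw [hb]; simpa using List.length_take_le _ _
  have hdecomp : w = a ++ v :: (b ++ v :: c) := by
    have e1 : w = a ++ w.drop K := (List.take_append_drop K w).symm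
    have e2 : w.drop K = v :: w.drop (K+1) := by
      rw [List.drop_eq_getElem_cons (by omega : K < w.length)]
      simp [hv, List.get_eq_getElem, hK]
    have e3 : w.drop (K+1) = b ++ (w.drop (K+1)).drop (L-K-1) :=
      (List.take_append_drop _ _).symm
    have e4 : (w.drop (K+1)).drop (L-K-1) = w.drop L := by
      rw [List.drop_drop]; congr 1; omega
    have e5 : w.drop L = v :: c := by
      rw [List.drop_eq_getElem_cons (by omega : L < w.length)]
      have hvl : w[L] = v := by
        simp [List.get_eq_getElem, hL] at heq ⊢; exact heq.symm
      rw [hvl]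
    calc w = a ++ w.drop K := e1
      _ = a ++ v :: (b ++ v :: c) := by rw [e2, e3, e4, e5]
  have hbadj : ∀ x ∈ b, G.Adj v x := by
    intro x hx
    obtain ⟨i, hi, rfl⟩ := List.getElem_of_mem hx
    have hiL : i < L - K - 1 := lt_of_lt_of_le hi hbl
    have hlt : K + 1 + i < w.length := by omega
    have hib : b[i] = w[K+1+i] := by
      simp only [hb, List.getElem_take, List.getElem_drop]
    rw [hib]
    have := hadj ⟨K+1+i, hlt⟩ (by simp [Fin.lt_def, hK]; omega)
      (by simp [Fin.lt_def, hL]; omega)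
    simpa [hv, List.get_eq_getElem] using this
  refine ⟨a ++ v :: (b ++ c), ?_, ?_⟩
  · have h1 : WordEquiv G ((a ++ [v]) ++ b ++ v :: c) ((a ++ [v]) ++ v :: (b ++ c)) :=
      bubble G v b (a ++ [v]) c hbadj
    have h2 : WordStep G (a ++ v :: v :: (b ++ c)) (a ++ v :: (b ++ c)) :=
      WordStep.delete a (b ++ c) v
    have h1' : WordEquiv G (a ++ v :: (b ++ v :: c)) (a ++ v :: v :: (b ++ c)) := by
      simpa using h1
    rw [hdecomp]
    exact Relation.EqvGen.trans _ _ _ h1' (Relation.EqvGen.rel _ _ h2)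
  · rw [hdecomp]; simp

lemma aux_reduced {V : Type} (G : SimpleGraph V) :
    ∀ n (w : List V), w.length ≤ n → ∃ w', WordEquiv G w w' ∧ Reduced G w' := by
  intro n
  induction n with
  | zero =>
    intro w hw
    have : w = [] := List.length_eq_zero_iff.mp (Nat.le_zero.mp hw)
    subst this
    exact ⟨[], Relation.EqvGen.refl _, fun k => absurd k.isLt (by simp)⟩
  | succ n ih =>
    intro w hw
    by_cases hred : Reduced G w
    · exact ⟨w, Relation.EqvGen.refl _, hred⟩
    · obtain ⟨w₀, he, hl⟩ := shrink G w hred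
      obtain ⟨w', he', hr⟩ := ih w₀ (by omega)
      exact ⟨w', Relation.EqvGen.trans _ _ _ he he', hr⟩

/-- Every word over the vertex set of a simplicial graph is equivalent,
under the equivalence relation `∼`, to a reduced word. -/
theorem exists_reduced_word {V : Type} (G : SimpleGraph V) (w : List V) :
    ∃ w' : List V, WordEquiv G w w' ∧ Reduced G w' :=
  aux_reduced G w.length w le_rfl
end
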